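/- arXiv:1509.00003 — 2 statements merged into one kernel-verified Lean document; each statement's English description precedes it below -/
import Mathlib

section
/- Let H ∈ (1/2,1), κ = H - 1/2, and for f ∈ L²([0,τ]) define h = K̂_τ f := I¹_{0+}[x^κ I^κ_{0+}(x^{-κ} f)] (composition of fractional integrals). Then h ∈ W^{1,2}([0,τ]) and ‖h‖_{W^{1,2}([0,τ])} ≤ c_H τ^{H-1/2} ‖f‖_{L²([0,τ])}. -/
open MeasureTheory

section Stmt9AuxSection

open Set

namespace Stmt9Aux

lemma beta_integrable {κ : ℝ} (hκ : 0 < κ) (hκ' : κ < 1/2) {s : ℝ} (hs : 0 < s) :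
    IntegrableOn (fun u => (s - u) ^ (κ - 1) * u ^ (-(2 * κ))) (Ioc 0 s) volume := by
  have hmeas : Measurable fun u : ℝ => (s - u) ^ (κ - 1) * u ^ (-(2 * κ)) :=
    ((measurable_const.sub measurable_id).pow_const _).mul (measurable_id.pow_const _)
  have hsplit : Ioc (0:ℝ) s = Ioc 0 (s/2) ∪ Ioc (s/2) s :=
    (Set.Ioc_union_Ioc_eq_Ioc (by linarith) (by linarith)).symm
  rw [hsplit]
  apply IntegrableOn.union
  · have hint : IntegrableOn (fun u : ℝ => (s/2) ^ (κ-1) * u ^ (-(2*κ))) (Ioc 0 (s/2)) volume := by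
      have h := (intervalIntegral.intervalIntegrable_rpow' (a := 0) (b := s/2) (r := -(2*κ))
        (by linarith)).const_mul ((s/2) ^ (κ-1))
      rwa [intervalIntegrable_iff_integrableOn_Ioc_of_le (by linarith)] at h
    refine Integrable.mono' hint hmeas.aestronglyMeasurable ?_
    filter_upwards [ae_restrict_mem measurableSet_Ioc] with u hu
    have h1 : (0:ℝ) ≤ (s-u) ^ (κ-1) := Real.rpow_nonneg (by linarith [hu.2]) _
    have h2 : (0:ℝ) ≤ u ^ (-(2*κ)) := Real.rpow_nonneg hu.1.le _
    rw [Real.norm_eq_abs, abs_of_nonneg (mul_nonneg h1 h2)]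
    exact mul_le_mul_of_nonneg_right
      (Real.rpow_le_rpow_of_nonpos (by linarith) (by linarith [hu.2]) (by linarith)) h2
  · have hint : IntegrableOn (fun u : ℝ => (s-u) ^ (κ-1) * (s/2) ^ (-(2*κ))) (Ioc (s/2) s) volume := by
      have h0 : IntervalIntegrable (fun x : ℝ => x ^ (κ-1)) volume 0 (s/2) :=
        intervalIntegral.intervalIntegrable_rpow' (by linarith)
      have h1 := ((h0.comp_sub_left s).symm).mul_const ((s/2) ^ (-(2*κ)))
      rw [intervalIntegrable_iff_integrableOn_Ioc_of_le (by linarith)] at h1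
      have : s - s/2 = s/2 := by ring
      rwa [this, sub_zero] at h1
    refine Integrable.mono' hint hmeas.aestronglyMeasurable ?_
    filter_upwards [ae_restrict_mem measurableSet_Ioc] with u hu
    have h1 : (0:ℝ) ≤ (s-u) ^ (κ-1) := Real.rpow_nonneg (by linarith [hu.2]) _
    have h2 : (0:ℝ) ≤ u ^ (-(2*κ)) := Real.rpow_nonneg (by linarith [hu.1]) _
    rw [Real.norm_eq_abs, abs_of_nonneg (mul_nonneg h1 h2)]
    exact mul_le_mul_of_nonneg_left
      (Real.rpow_le_rpow_of_nonpos (by linarith) hu.1.le (by linarith)) h1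

lemma beta_value {κ : ℝ} (hκ : 0 < κ) (hκ' : κ < 1/2) {s : ℝ} (hs : 0 < s) :
    ∫ u in Ioc (0:ℝ) s, (s - u) ^ (κ - 1) * u ^ (-(2 * κ))
      = (∫ t in (0:ℝ)..1, (1 - t) ^ (κ - 1) * t ^ (-(2 * κ))) * s ^ (-κ) := by
  have key := intervalIntegral.integral_comp_mul_right
    (a := 0) (b := 1) (c := s) (fun u => (s - u) ^ (κ - 1) * u ^ (-(2 * κ))) hs.ne'
  simp only [zero_mul, one_mul, smul_eq_mul] at key
  have hcong : (∫ t in (0:ℝ)..1, (s - t * s) ^ (κ - 1) * (t * s) ^ (-(2 * κ)))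
      = s ^ (-κ - 1) * ∫ t in (0:ℝ)..1, (1 - t) ^ (κ - 1) * t ^ (-(2 * κ)) := by
    rw [← intervalIntegral.integral_const_mul]
    apply intervalIntegral.integral_congr
    intro t ht
    rw [Set.uIcc_of_le (by norm_num)] at ht
    have ht0 : 0 ≤ t := ht.1
    have ht1 : t ≤ 1 := ht.2
    dsimp only
    have h1 : s - t * s = s * (1 - t) := by ring
    have hss : s ^ (κ-1) * s ^ (-(2*κ)) = s ^ (-κ-1) := by
      rw [← Real.rpow_add hs]; ring_nf
    rw [h1, Real.mul_rpow hs.le (by linarith), mul_comm t s,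
      Real.mul_rpow hs.le ht0, mul_mul_mul_comm, hss]
  rw [hcong] at key
  rw [← intervalIntegral.integral_of_le hs.le]
  have h2 : (∫ u in (0:ℝ)..s, (s - u) ^ (κ - 1) * u ^ (-(2 * κ)))
      = s * (s ^ (-κ - 1) * ∫ t in (0:ℝ)..1, (1 - t) ^ (κ - 1) * t ^ (-(2 * κ))) := by
    rw [key, ← mul_assoc, mul_inv_cancel₀ hs.ne', one_mul]
  rw [h2]
  have h3 : s * s ^ (-κ - 1) = s ^ (-κ) := by
    nth_rewrite 1 [← Real.rpow_one s]
    rw [← Real.rpow_add hs]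
    norm_num
  rw [← mul_assoc, h3, mul_comm]

lemma tail_integrable {κ : ℝ} (hκ : 0 < κ) {u τ : ℝ} (huτ : u ≤ τ) :
    IntegrableOn (fun s => (s - u) ^ (κ - 1)) (Ioc u τ) volume := by
  have h0 : IntervalIntegrable (fun x : ℝ => x ^ (κ-1)) volume 0 (τ - u) :=
    intervalIntegral.intervalIntegrable_rpow' (by linarith)
  have h1 := h0.comp_sub_right u
  rw [intervalIntegrable_iff_integrableOn_Ioc_of_le (by linarith)] at h1
  simpa using h1

lemma tail_lintegral {κ : ℝ} (hκ : 0 < κ) {u τ : ℝ} (hu : 0 < u) (huτ : u ≤ τ) (hτ : 0 < τ) :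
    ∫⁻ s in Ioc u τ, ENNReal.ofReal ((s - u) ^ (κ - 1)) ≤ ENNReal.ofReal (τ ^ κ / κ) := by
  have hnn : 0 ≤ᵐ[volume.restrict (Ioc u τ)] fun s => (s - u) ^ (κ - 1) := by
    filter_upwards [ae_restrict_mem measurableSet_Ioc] with s hs
    exact Real.rpow_nonneg (by linarith [hs.1]) _
  rw [← ofReal_integral_eq_lintegral_ofReal (tail_integrable hκ huτ) hnn]
  apply ENNReal.ofReal_le_ofReal
  rw [← intervalIntegral.integral_of_le huτ,
    intervalIntegral.integral_comp_sub_right (fun x => x ^ (κ-1)) u,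
    integral_rpow (Or.inl (by linarith))]
  rw [sub_self, Real.zero_rpow (ne_of_gt (by linarith)), sub_add_cancel, sub_zero]
  have h : (τ - u) ^ κ ≤ τ ^ κ := Real.rpow_le_rpow (by linarith) (by linarith) hκ.le
  gcongr

end Stmt9Aux

end Stmt9AuxSection

open Set Stmt9Aux in
theorem stmt9 (H : ℝ) (hH : 1/2 < H) (hH1 : H < 1) :
    ∃ c > 0, ∀ τ : ℝ, 0 < τ → ∀ f : ℝ → ℝ,
      MemLp f 2 (volume.restrict (Set.Ioc (0:ℝ) τ)) →
      IntegrableOn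
        (fun s : ℝ => (s ^ (H - 1/2) *
          ((Real.Gamma (H - 1/2))⁻¹ *
            ∫ u in (0:ℝ)..s, (s - u) ^ (H - 1/2 - 1) * (u ^ (-(H - 1/2)) * f u))) ^ 2)
        (Set.Ioc (0:ℝ) τ) ∧
      (∫ s in Set.Ioc (0:ℝ) τ, (s ^ (H - 1/2) *
          ((Real.Gamma (H - 1/2))⁻¹ *
            ∫ u in (0:ℝ)..s, (s - u) ^ (H - 1/2 - 1) * (u ^ (-(H - 1/2)) * f u))) ^ 2)
        ≤ (c * τ ^ (H - 1/2)) ^ 2 * ∫ s in Set.Ioc (0:ℝ) τ, (f s) ^ 2 := by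
  set κ := H - 1/2 with hκdef
  have hκ : 0 < κ := by rw [hκdef]; linarith
  have hκ' : κ < 1/2 := by rw [hκdef]; linarith
  set C₀ : ℝ := ∫ t in (0:ℝ)..1, (1 - t) ^ (κ - 1) * t ^ (-(2 * κ)) with hC₀
  have hC₀nn : 0 ≤ C₀ :=
    intervalIntegral.integral_nonneg (by norm_num) (fun t ht =>
      mul_nonneg (Real.rpow_nonneg (by linarith [ht.2]) _) (Real.rpow_nonneg ht.1 _))
  have hΓ : 0 < Real.Gamma κ := Real.Gamma_pos_of_pos hκ
  set Γi : ℝ := (Real.Gamma κ)⁻¹ with hΓi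
  have hΓinn : 0 ≤ Γi := by positivity
  set B : ℝ := Γi ^ 2 * C₀ / κ with hB
  have hBnn : 0 ≤ B := by positivity
  refine ⟨max 1 (Real.sqrt B), lt_of_lt_of_le one_pos (le_max_left _ _), ?_⟩
  intro τ hτ f hf
  obtain ⟨f', hf'm, hff'⟩ : ∃ f', StronglyMeasurable f' ∧ f =ᵐ[volume.restrict (Ioc 0 τ)] f' :=
    ⟨hf.1.mk f, hf.1.stronglyMeasurable_mk, hf.1.ae_eq_mk⟩
  have hf'meas : Measurable f' := hf'm.measurable
  -- kernel and its measurable extension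
  set m : ℝ → ℝ → ℝ := fun s u => (s - u) ^ (κ - 1) * (u ^ (-κ) * f' u) with hm
  set F : ℝ × ℝ → ℝ := fun p => if 0 < p.2 ∧ p.2 ≤ p.1 then m p.1 p.2 else 0 with hFdef
  have hFmeas : Measurable F := by
    apply Measurable.ite
    · exact (measurableSet_lt measurable_const measurable_snd).inter
        (measurableSet_le measurable_snd measurable_fst)
    · exact ((measurable_fst.sub measurable_snd).pow_const _).mul
        ((measurable_snd.pow_const _).mul (hf'meas.comp measurable_snd))
    · exact measurable_const
  set g : ℝ → ℝ := fun s => s ^ κ * (Γi * ∫ u, F (s, u)) with hg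
  have hInt : StronglyMeasurable (fun s => ∫ u, F (s, u)) :=
    hFmeas.stronglyMeasurable.integral_prod_right'
  have hgM : Measurable g := (measurable_id.pow_const κ).mul (measurable_const.mul hInt.measurable)
  -- F integral = set integral of m
  have hFs : ∀ s : ℝ, 0 < s → (∫ u, F (s, u)) = ∫ u in Ioc (0:ℝ) s, m s u := by
    intro s hs0
    have h1 : ∀ u, F (s, u) = (Ioc (0:ℝ) s).indicator (m s) u := by
      intro u
      by_cases h : u ∈ Ioc (0:ℝ) s
      · rw [Set.indicator_of_mem h]; rw [mem_Ioc] at h; simp [hFdef, h.1, h.2]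
      · rw [Set.indicator_of_notMem h]; rw [mem_Ioc] at h
        simp only [hFdef, ite_eq_right_iff]
        intro hc; exact absurd hc h
    simp only [h1]
    exact integral_indicator measurableSet_Ioc
  -- statement integrand equals (g s)^2 on Ioc 0 τ
  have hkey : ∀ s ∈ Ioc (0:ℝ) τ,
      (s ^ κ * (Γi * ∫ u in (0:ℝ)..s, (s - u) ^ (κ - 1) * (u ^ (-κ) * f u))) = g s := by
    intro s hs
    have h1 : (∫ u in (0:ℝ)..s, (s - u) ^ (κ - 1) * (u ^ (-κ) * f u))
        = ∫ u in Ioc (0:ℝ) s, (s - u) ^ (κ - 1) * (u ^ (-κ) * f u) :=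
      intervalIntegral.integral_of_le hs.1.le
    have h2 : (∫ u in Ioc (0:ℝ) s, (s - u) ^ (κ - 1) * (u ^ (-κ) * f u))
        = ∫ u in Ioc (0:ℝ) s, m s u := by
      apply setIntegral_congr_ae measurableSet_Ioc
      have := (ae_restrict_iff' measurableSet_Ioc).mp hff'
      filter_upwards [this] with u hu hu'
      rw [hu (Ioc_subset_Ioc_right hs.2 hu')]
    have hgs : g s = s ^ κ * (Γi * ∫ u, F (s, u)) := rfl
    rw [h1, h2, hgs, hFs s hs.1]
  -- the ENNReal-valued majorant
  set G : ℝ → ℝ → ENNReal := fun s u =>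
    ENNReal.ofReal ((s - u) ^ (κ - 1)) * ENNReal.ofReal ((f' u) ^ 2) with hG
  set z : ℝ → ENNReal := fun s => ∫⁻ u in Ioc (0:ℝ) s, G s u with hz
  -- pointwise Cauchy-Schwarz bound
  have hpt : ∀ s ∈ Ioc (0:ℝ) τ,
      ENNReal.ofReal ((g s) ^ 2) ≤ ENNReal.ofReal (Γi ^ 2 * C₀ * τ ^ κ) * z s := by
    intro s hs
    obtain ⟨hs0, hsτ⟩ := hs
    have hgs : g s = s ^ κ * (Γi * ∫ u in Ioc (0:ℝ) s, m s u) := by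
      have : g s = s ^ κ * (Γi * ∫ u, F (s, u)) := rfl
      rw [this, hFs s hs0]
    by_cases hint : IntegrableOn (fun u => m s u) (Ioc (0:ℝ) s) volume
    swap
    · rw [hgs, integral_undef hint]
      simp
    -- integrable case
    set I : ℝ := ∫ u in Ioc (0:ℝ) s, |m s u| with hI
    have hInn : (0:ℝ) ≤ I := integral_nonneg fun u => abs_nonneg _
    have habs : |∫ u in Ioc (0:ℝ) s, m s u| ≤ I := by
      simpa [Real.norm_eq_abs] using
        norm_integral_le_integral_norm (μ := volume.restrict (Ioc (0:ℝ) s)) (m s)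
    have h2 : (g s) ^ 2 ≤ (s ^ κ * (Γi * I)) ^ 2 := by
      rw [← sq_abs]
      apply pow_le_pow_left₀ (abs_nonneg _)
      rw [hgs, abs_mul, abs_mul, abs_of_nonneg (Real.rpow_nonneg hs0.le κ), abs_of_nonneg hΓinn]
      gcongr
    set X : ENNReal := ∫⁻ u in Ioc (0:ℝ) s, ENNReal.ofReal |m s u| with hX
    have hXI : ENNReal.ofReal I = X :=
      ofReal_integral_eq_lintegral_ofReal hint.abs (Filter.Eventually.of_forall fun u => abs_nonneg _)
    -- Cauchy-Schwarz
    set a : ℝ → ℝ := fun u => (s - u) ^ ((κ - 1)/2) * u ^ (-κ) with ha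
    set b : ℝ → ℝ := fun u => (s - u) ^ ((κ - 1)/2) * |f' u| with hb
    have hamC : Measurable fun u => ENNReal.ofReal (a u) :=
      (((measurable_const.sub measurable_id).pow_const _).mul
        (measurable_id.pow_const _)).ennreal_ofReal
    have hbmC : Measurable fun u => ENNReal.ofReal (b u) :=
      (((measurable_const.sub measurable_id).pow_const _).mul hf'meas.abs).ennreal_ofReal
    have hab : ∀ᵐ u ∂(volume.restrict (Ioc (0:ℝ) s)),
        ENNReal.ofReal |m s u| = ENNReal.ofReal (a u) * ENNReal.ofReal (b u) := by
      filter_upwards [ae_restrict_mem measurableSet_Ioc] with u hu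
      have h0u : 0 < u := hu.1
      have hsu : (0:ℝ) ≤ s - u := by linarith [hu.2]
      have hanng : 0 ≤ a u := mul_nonneg (Real.rpow_nonneg hsu _) (Real.rpow_nonneg h0u.le _)
      rw [← ENNReal.ofReal_mul hanng]
      congr 1
      have h3 : a u * b u = ((s-u) ^ ((κ-1)/2) * (s-u) ^ ((κ-1)/2)) * (u ^ (-κ) * |f' u|) := by
        rw [ha, hb]; ring
      have h4 : (s-u) ^ ((κ-1)/2) * (s-u) ^ ((κ-1)/2) = (s-u) ^ (κ-1) := by
        rw [← Real.rpow_add' hsu (by rw [← add_div, add_self_div_two]; exact sub_ne_zero.mpr (ne_of_lt (lt_trans hκ' (by norm_num))) : (κ-1)/2 + (κ-1)/2 ≠ 0)]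
        ring_nf
      rw [hm]
      rw [abs_mul, abs_of_nonneg (Real.rpow_nonneg hsu _), abs_mul,
        abs_of_nonneg (Real.rpow_nonneg h0u.le _), h3, h4]
    have hCS := ENNReal.lintegral_mul_le_Lp_mul_Lq (volume.restrict (Ioc (0:ℝ) s))
      (⟨by norm_num, by norm_num, by norm_num⟩ : Real.HolderConjugate 2 2)
      hamC.aemeasurable hbmC.aemeasurable
    simp only [Pi.mul_apply] at hCS
    set y : ENNReal := ∫⁻ u in Ioc (0:ℝ) s, (ENNReal.ofReal (a u)) ^ (2:ℝ) with hy
    set w : ENNReal := ∫⁻ u in Ioc (0:ℝ) s, (ENNReal.ofReal (b u)) ^ (2:ℝ) with hw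
    have hXle : X ≤ y ^ (1/2:ℝ) * w ^ (1/2:ℝ) := by
      rw [hX, lintegral_congr_ae hab]
      exact hCS
    have hsq : ∀ v : ENNReal, v ^ (1/2:ℝ) * v ^ (1/2:ℝ) = v := by
      intro v
      rw [← ENNReal.rpow_add_of_nonneg _ _ (by norm_num) (by norm_num)]
      norm_num
    have hX2 : X ^ 2 ≤ y * w := by
      have h5 := mul_le_mul' hXle hXle
      rw [mul_mul_mul_comm, hsq, hsq] at h5
      rw [sq]
      exact h5
    -- compute y
    have hyval : y = ENNReal.ofReal (C₀ * s ^ (-κ)) := by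
      have e1 : ∀ᵐ u ∂(volume.restrict (Ioc (0:ℝ) s)),
          (ENNReal.ofReal (a u)) ^ (2:ℝ) = ENNReal.ofReal ((s - u) ^ (κ-1) * u ^ (-(2*κ))) := by
        filter_upwards [ae_restrict_mem measurableSet_Ioc] with u hu
        have hsu : (0:ℝ) ≤ s - u := by linarith [hu.2]
        have hanng : 0 ≤ a u := mul_nonneg (Real.rpow_nonneg hsu _) (Real.rpow_nonneg hu.1.le _)
        rw [show (2:ℝ) = ((2:ℕ):ℝ) by norm_num, ENNReal.rpow_natCast,
          ← ENNReal.ofReal_pow hanng]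
        congr 1
        rw [ha]
        rw [mul_pow, ← Real.rpow_natCast ((s-u) ^ ((κ-1)/2)) 2, ← Real.rpow_mul hsu,
          ← Real.rpow_natCast (u ^ (-κ)) 2, ← Real.rpow_mul hu.1.le,
          show (κ-1)/2*((2:ℕ):ℝ) = κ-1 by push_cast; ring,
          show -κ*((2:ℕ):ℝ) = -((2:ℝ)*κ) by push_cast; ring]
        norm_num
      rw [hy, lintegral_congr_ae e1,
        ← ofReal_integral_eq_lintegral_ofReal (beta_integrable hκ hκ' hs0) ?_,
        beta_value hκ hκ' hs0]
      filter_upwards [ae_restrict_mem measurableSet_Ioc] with u hu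
      exact mul_nonneg (Real.rpow_nonneg (by linarith [hu.2]) _) (Real.rpow_nonneg hu.1.le _)
    -- w is z s
    have hwval : w = z s := by
      rw [hw, hz]
      apply lintegral_congr_ae
      filter_upwards [ae_restrict_mem measurableSet_Ioc] with u hu
      have hsu : (0:ℝ) ≤ s - u := by linarith [hu.2]
      have hbnng : 0 ≤ b u := mul_nonneg (Real.rpow_nonneg hsu _) (abs_nonneg _)
      rw [show (2:ℝ) = ((2:ℕ):ℝ) by norm_num, ENNReal.rpow_natCast, ← ENNReal.ofReal_pow hbnng,
        hb]
      rw [mul_pow, sq_abs, ← Real.rpow_natCast ((s-u) ^ ((κ-1)/2)) 2, ← Real.rpow_mul hsu,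
        show (κ-1)/2*((2:ℕ):ℝ) = κ-1 by push_cast; ring,
        hG, ENNReal.ofReal_mul (Real.rpow_nonneg hsu _)]
    -- put it together
    calc ENNReal.ofReal ((g s) ^ 2)
        ≤ ENNReal.ofReal ((s ^ κ * (Γi * I)) ^ 2) := ENNReal.ofReal_le_ofReal h2
      _ = ENNReal.ofReal ((s ^ κ) ^ 2 * Γi ^ 2) * X ^ 2 := by
          rw [← hXI, ← ENNReal.ofReal_pow hInn, ← ENNReal.ofReal_mul (by positivity)]
          congr 1; ring
      _ ≤ ENNReal.ofReal ((s ^ κ) ^ 2 * Γi ^ 2) * (ENNReal.ofReal (C₀ * s ^ (-κ)) * z s) := by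
          rw [← hyval, ← hwval]
          exact mul_le_mul_right hX2 _
      _ = ENNReal.ofReal ((s ^ κ) ^ 2 * Γi ^ 2 * (C₀ * s ^ (-κ))) * z s := by
          rw [← mul_assoc, ← ENNReal.ofReal_mul (by positivity)]
      _ ≤ ENNReal.ofReal (Γi ^ 2 * C₀ * τ ^ κ) * z s := by
          apply mul_le_mul_left
          apply ENNReal.ofReal_le_ofReal
          have h6 : s ^ κ * s ^ (-κ) = 1 := by
            rw [← Real.rpow_add hs0]; norm_num
          have e2 : (s ^ κ) ^ 2 * Γi ^ 2 * (C₀ * s ^ (-κ)) = Γi ^ 2 * C₀ * s ^ κ := by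
            calc (s ^ κ) ^ 2 * Γi ^ 2 * (C₀ * s ^ (-κ))
                = (s ^ κ * s ^ (-κ)) * (s ^ κ * Γi ^ 2 * C₀) := by ring
              _ = Γi ^ 2 * C₀ * s ^ κ := by rw [h6]; ring
          rw [e2]
          exact mul_le_mul_of_nonneg_left (Real.rpow_le_rpow hs0.le hsτ hκ.le) (by positivity)
  -- Tonelli
  set Ghat : ℝ × ℝ → ENNReal := fun p => if 0 < p.2 ∧ p.2 ≤ p.1 then G p.1 p.2 else 0 with hGhat
  have hGhatMeas : Measurable Ghat := by
    apply Measurable.ite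
    · exact (measurableSet_lt measurable_const measurable_snd).inter
        (measurableSet_le measurable_snd measurable_fst)
    · exact (((measurable_fst.sub measurable_snd).pow_const _).ennreal_ofReal).mul
        (((hf'meas.comp measurable_snd).pow_const 2).ennreal_ofReal)
    · exact measurable_const
  have hz_eq : ∀ s ∈ Ioc (0:ℝ) τ, z s = ∫⁻ u in Ioc (0:ℝ) τ, Ghat (s, u) := by
    intro s hs
    have h1 : ∀ u, Ghat (s, u) = (Ioc (0:ℝ) s).indicator (fun u => G s u) u := by
      intro u
      by_cases h : u ∈ Ioc (0:ℝ) s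
      · rw [Set.indicator_of_mem h]; rw [mem_Ioc] at h; simp [hGhat, h.1, h.2]
      · rw [Set.indicator_of_notMem h]; rw [mem_Ioc] at h
        simp only [hGhat, ite_eq_right_iff]
        intro hc; exact absurd hc h
    simp only [h1]
    rw [lintegral_indicator measurableSet_Ioc, Measure.restrict_restrict measurableSet_Ioc,
      Set.Ioc_inter_Ioc, max_self, min_eq_left hs.2]
  have hswap : (∫⁻ s in Ioc (0:ℝ) τ, ∫⁻ u in Ioc (0:ℝ) τ, Ghat (s, u))
      = ∫⁻ u in Ioc (0:ℝ) τ, ∫⁻ s in Ioc (0:ℝ) τ, Ghat (s, u) :=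
    lintegral_lintegral_swap hGhatMeas.aemeasurable
  have hinner : ∀ u ∈ Ioc (0:ℝ) τ,
      (∫⁻ s in Ioc (0:ℝ) τ, Ghat (s, u))
        ≤ ENNReal.ofReal (τ ^ κ / κ) * ENNReal.ofReal ((f' u) ^ 2) := by
    intro u hu
    have h1 : ∀ s, Ghat (s, u)
        = (Ici u).indicator (fun s => ENNReal.ofReal ((s - u) ^ (κ - 1))) s
            * ENNReal.ofReal ((f' u) ^ 2) := by
      intro s
      by_cases h : u ≤ s
      · rw [Set.indicator_of_mem (mem_Ici.mpr h)]
        simp [hGhat, hG, hu.1, h]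
      · rw [Set.indicator_of_notMem (fun hc => h (mem_Ici.mp hc)), zero_mul]
        simp [hGhat, h]
    simp only [h1]
    rw [lintegral_mul_const' _ _ ENNReal.ofReal_ne_top]
    apply mul_le_mul_left
    rw [lintegral_indicator measurableSet_Ici, Measure.restrict_restrict measurableSet_Ici]
    have h2 : Ici u ∩ Ioc (0:ℝ) τ = Icc u τ := by
      ext x
      simp only [mem_inter_iff, mem_Ici, mem_Ioc, mem_Icc]
      exact ⟨fun ⟨h3, _, h5⟩ => ⟨h3, h5⟩, fun ⟨h3, h4⟩ => ⟨h3, lt_of_lt_of_le hu.1 h3, h4⟩⟩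
    rw [h2, ← Measure.restrict_congr_set Ioc_ae_eq_Icc]
    exact tail_lintegral hκ hu.1 hu.2 hτ
  -- the L² norm of f
  have hf2 : (∫⁻ u in Ioc (0:ℝ) τ, ENNReal.ofReal ((f' u) ^ 2))
      = ENNReal.ofReal (∫ u in Ioc (0:ℝ) τ, (f u) ^ 2) := by
    have hfsq : Integrable (fun u => (f u) ^ 2) (volume.restrict (Ioc (0:ℝ) τ)) :=
      hf.integrable_sq
    rw [ofReal_integral_eq_lintegral_ofReal hfsq
      (Filter.Eventually.of_forall fun u => sq_nonneg _)]
    apply lintegral_congr_ae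
    filter_upwards [hff'] with u hu
    rw [hu]
  -- master bound
  have hτκnn : (0:ℝ) ≤ τ ^ κ := Real.rpow_nonneg hτ.le κ
  have hfsqnn : (0:ℝ) ≤ ∫ u in Ioc (0:ℝ) τ, (f u) ^ 2 := integral_nonneg fun u => sq_nonneg _
  have hmain : (∫⁻ s in Ioc (0:ℝ) τ, ENNReal.ofReal ((g s) ^ 2))
      ≤ ENNReal.ofReal (B * (τ ^ κ) ^ 2 * ∫ u in Ioc (0:ℝ) τ, (f u) ^ 2) := by
    calc ∫⁻ s in Ioc (0:ℝ) τ, ENNReal.ofReal ((g s) ^ 2)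
        ≤ ∫⁻ s in Ioc (0:ℝ) τ, ENNReal.ofReal (Γi ^ 2 * C₀ * τ ^ κ) * z s := by
          apply lintegral_mono_ae
          filter_upwards [ae_restrict_mem measurableSet_Ioc] with s hs
          exact hpt s hs
      _ = ENNReal.ofReal (Γi ^ 2 * C₀ * τ ^ κ) * ∫⁻ s in Ioc (0:ℝ) τ, z s :=
          lintegral_const_mul' _ _ ENNReal.ofReal_ne_top
      _ ≤ ENNReal.ofReal (Γi ^ 2 * C₀ * τ ^ κ)
            * (ENNReal.ofReal (τ ^ κ / κ) * ENNReal.ofReal (∫ u in Ioc (0:ℝ) τ, (f u) ^ 2)) := by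
          apply mul_le_mul_right
          calc (∫⁻ s in Ioc (0:ℝ) τ, z s)
              = ∫⁻ s in Ioc (0:ℝ) τ, ∫⁻ u in Ioc (0:ℝ) τ, Ghat (s, u) := by
                apply lintegral_congr_ae
                filter_upwards [ae_restrict_mem measurableSet_Ioc] with s hs
                exact hz_eq s hs
            _ = ∫⁻ u in Ioc (0:ℝ) τ, ∫⁻ s in Ioc (0:ℝ) τ, Ghat (s, u) := hswap
            _ ≤ ∫⁻ u in Ioc (0:ℝ) τ, ENNReal.ofReal (τ ^ κ / κ) * ENNReal.ofReal ((f' u) ^ 2) := by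
                apply lintegral_mono_ae
                filter_upwards [ae_restrict_mem measurableSet_Ioc] with u hu
                exact hinner u hu
            _ = ENNReal.ofReal (τ ^ κ / κ) * ∫⁻ u in Ioc (0:ℝ) τ, ENNReal.ofReal ((f' u) ^ 2) :=
                lintegral_const_mul' _ _ ENNReal.ofReal_ne_top
            _ = ENNReal.ofReal (τ ^ κ / κ) * ENNReal.ofReal (∫ u in Ioc (0:ℝ) τ, (f u) ^ 2) := by
                rw [hf2]
      _ ≤ ENNReal.ofReal (B * (τ ^ κ) ^ 2 * ∫ u in Ioc (0:ℝ) τ, (f u) ^ 2) := by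
          rw [← ENNReal.ofReal_mul (div_nonneg hτκnn hκ.le),
            ← ENNReal.ofReal_mul (mul_nonneg (mul_nonneg (sq_nonneg Γi) hC₀nn) hτκnn)]
          apply ENNReal.ofReal_le_ofReal
          apply le_of_eq
          rw [hB]
          field_simp
  -- statement function vs g²
  have hstmg : (fun s => (s ^ κ * (Γi * ∫ u in (0:ℝ)..s, (s - u) ^ (κ - 1) * (u ^ (-κ) * f u))) ^ 2)
      =ᵐ[volume.restrict (Ioc (0:ℝ) τ)] (fun s => (g s) ^ 2) := by
    filter_upwards [ae_restrict_mem measurableSet_Ioc] with s hs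
    rw [hkey s hs]
  have hsm : AEStronglyMeasurable
      (fun s => (s ^ κ * (Γi * ∫ u in (0:ℝ)..s, (s - u) ^ (κ - 1) * (u ^ (-κ) * f u))) ^ 2)
      (volume.restrict (Ioc (0:ℝ) τ)) :=
    ((hgM.pow_const 2).aestronglyMeasurable).congr hstmg.symm
  have hlinteq : (∫⁻ s in Ioc (0:ℝ) τ, ENNReal.ofReal
        ((s ^ κ * (Γi * ∫ u in (0:ℝ)..s, (s - u) ^ (κ - 1) * (u ^ (-κ) * f u))) ^ 2))
      = ∫⁻ s in Ioc (0:ℝ) τ, ENNReal.ofReal ((g s) ^ 2) := by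
    apply lintegral_congr_ae
    filter_upwards [hstmg] with s hs
    rw [hs]
  constructor
  · refine ⟨hsm, ?_⟩
    rw [hasFiniteIntegral_iff_ofReal (Filter.Eventually.of_forall fun s => sq_nonneg _)]
    rw [hlinteq]
    exact lt_of_le_of_lt hmain ENNReal.ofReal_lt_top
  · rw [integral_eq_lintegral_of_nonneg_ae (Filter.Eventually.of_forall fun s => sq_nonneg _) hsm]
    rw [hlinteq]
    have h7 := ENNReal.toReal_mono ENNReal.ofReal_ne_top hmain
    rw [ENNReal.toReal_ofReal (mul_nonneg (mul_nonneg hBnn (sq_nonneg _)) hfsqnn)] at h7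
    refine h7.trans ?_
    have h9 : (Real.sqrt B) ^ 2 = B := Real.sq_sqrt hBnn
    have h8 : B ≤ (max 1 (Real.sqrt B)) ^ 2 := by
      have h10 := pow_le_pow_left₀ (Real.sqrt_nonneg B) (le_max_right 1 (Real.sqrt B)) 2
      rw [h9] at h10
      exact h10
    rw [mul_pow]
    have := mul_le_mul_of_nonneg_right (mul_le_mul_of_nonneg_right h8 (sq_nonneg (τ ^ κ))) hfsqnn
    linarith
end

section
/- Let b : ℝ^d → ℝ^d be C¹ with uniformly bounded derivative, and suppose the path Y : [0,∞) → ℝ^d satisfies, for some ε ∈ (0, 1/2) and random constant Z: |Y_s - Y_{s-r}| ≤ Z (1+s)^{2ε} r^{H-ε} for all 0 < r ≤ s (with Y extended by Y_t = y₀ for t ≤ 0). Then for every s > 0 the fractional derivative [D_+^{H-1/2} b(Y)]_s = c_H ∫₀^∞ (b(Y_s) - b(Y_{s-r})) r^{-(H+1/2)} dr satisfies |[D_+^{H-1/2} b(Y)]_s| ≤ C (s^{1/2-ε} Z (1+s)^{2ε} + |Y_s - y₀| s^{1/2 - H}). -/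
open MeasureTheory

theorem stmt15 {d : ℕ} (H ε M : ℝ) (hH : 1/2 < H) (hH1 : H < 1)
    (hε : 0 < ε) (hε2 : ε < 1/2) (hM : 0 ≤ M)
    (Z : ℝ) (hZ : 0 ≤ Z) (y₀ : EuclideanSpace ℝ (Fin d))
    (Y : ℝ → EuclideanSpace ℝ (Fin d)) (hYc : Continuous Y)
    (hY0 : ∀ t : ℝ, t ≤ 0 → Y t = y₀)
    (hHol : ∀ r s : ℝ, 0 < r → r ≤ s →
      ‖Y s - Y (s - r)‖ ≤ Z * (1 + s) ^ (2*ε) * r ^ (H - ε))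
    (b : EuclideanSpace ℝ (Fin d) → EuclideanSpace ℝ (Fin d))
    (hb : ContDiff ℝ 1 b) (hb' : ∀ x, ‖fderiv ℝ b x‖ ≤ M) :
    ∃ C > 0, ∀ s : ℝ, 0 < s →
      IntegrableOn (fun r : ℝ => r ^ (-(H + 1/2)) • (b (Y s) - b (Y (s - r))))
        (Set.Ioi 0) ∧
      ‖∫ r in Set.Ioi (0:ℝ), r ^ (-(H + 1/2)) • (b (Y s) - b (Y (s - r)))‖
        ≤ C * (s ^ ((1:ℝ)/2 - ε) * Z * (1 + s) ^ (2*ε) + ‖Y s - y₀‖ * s ^ ((1:ℝ)/2 - H)) := by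
  have hεd : (0:ℝ) < 1/2 - ε := by linarith
  have hHd : (0:ℝ) < H - 1/2 := by linarith
  have hlip : ∀ x y : EuclideanSpace ℝ (Fin d), ‖b x - b y‖ ≤ M * ‖x - y‖ := fun x y =>
    convex_univ.norm_image_sub_le_of_norm_fderiv_le
      (fun z _ => hb.differentiable one_ne_zero z) (fun z _ => hb' z)
      (Set.mem_univ y) (Set.mem_univ x)
  refine ⟨M / (1/2 - ε) + M / (H - 1/2) + 1, by
    have h1 := div_nonneg hM hεd.le
    have h2 := div_nonneg hM hHd.le
    linarith, fun s hs => ?_⟩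
  set f : ℝ → EuclideanSpace ℝ (Fin d) :=
    fun r : ℝ => r ^ (-(H + 1/2)) • (b (Y s) - b (Y (s - r))) with hfdef
  set K1 : ℝ := M * Z * (1 + s) ^ (2*ε) with hK1
  have hK1n : 0 ≤ K1 := by positivity
  -- continuity on Ioi 0
  have hcont : ContinuousOn f (Set.Ioi (0:ℝ)) := by
    refine ContinuousOn.smul (f := fun r : ℝ => r ^ (-(H + 1/2)))
      (g := fun r : ℝ => b (Y s) - b (Y (s - r))) ?_ ?_
    · exact fun x hx =>
        (Real.continuousAt_rpow_const x _ (Or.inl (ne_of_gt hx))).continuousWithinAt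
    · exact (continuous_const.sub ((hb.continuous).comp
        (hYc.comp (continuous_const.sub continuous_id)))).continuousOn
  -- pointwise bound on Ioc 0 s
  have key : ∀ r ∈ Set.Ioc (0:ℝ) s, ‖f r‖ ≤ K1 * r ^ (-(1/2 + ε)) := by
    intro r hr
    obtain ⟨hr0, hrs⟩ := hr
    have h1 : ‖f r‖ = r ^ (-(H + 1/2)) * ‖b (Y s) - b (Y (s - r))‖ := by
      rw [hfdef]
      simp only [norm_smul, Real.norm_eq_abs, abs_of_nonneg (Real.rpow_nonneg hr0.le _)]
    rw [h1]
    have h2 : ‖b (Y s) - b (Y (s - r))‖ ≤ M * (Z * (1 + s) ^ (2*ε) * r ^ (H - ε)) :=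
      le_trans (hlip _ _) (by
        have := hHol r s hr0 hrs
        exact mul_le_mul_of_nonneg_left this hM)
    calc r ^ (-(H + 1/2)) * ‖b (Y s) - b (Y (s - r))‖
        ≤ r ^ (-(H + 1/2)) * (M * (Z * (1 + s) ^ (2*ε) * r ^ (H - ε))) :=
          mul_le_mul_of_nonneg_left h2 (Real.rpow_nonneg hr0.le _)
      _ = K1 * (r ^ (-(H + 1/2)) * r ^ (H - ε)) := by rw [hK1]; ring
      _ = K1 * r ^ (-(1/2 + ε)) := by
          rw [← Real.rpow_add hr0,
            show -(H + 1/2) + (H - ε) = -(1/2 + ε) by ring]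
  -- integrability of dominating function on Ioc 0 s
  have hg1 : IntegrableOn (fun r : ℝ => r ^ (-(1/2 + ε))) (Set.Ioc 0 s) := by
    have := intervalIntegral.intervalIntegrable_rpow' (a := 0) (b := s)
      (r := -(1/2 + ε)) (by linarith)
    rwa [intervalIntegrable_iff_integrableOn_Ioc_of_le hs.le] at this
  have hint1 : IntegrableOn f (Set.Ioc 0 s) := by
    refine Integrable.mono' (hg1.const_mul K1)
      ((hcont.mono Set.Ioc_subset_Ioi_self).aestronglyMeasurable measurableSet_Ioc) ?_
    exact (ae_restrict_iff' measurableSet_Ioc).2 (Filter.Eventually.of_forall key)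
  -- on Ioi s the path is frozen at y₀
  have hfe : Set.EqOn f (fun r : ℝ => r ^ (-(H + 1/2)) • (b (Y s) - b y₀)) (Set.Ioi s) := by
    intro r hr
    have : s - r ≤ 0 := by
      have := Set.mem_Ioi.mp hr; linarith
    simp only [hfdef, hY0 (s - r) this]
  have hint2 : IntegrableOn f (Set.Ioi s) := by
    refine IntegrableOn.congr_fun ?_ (fun r hr => (hfe hr).symm) measurableSet_Ioi
    exact (integrableOn_Ioi_rpow_of_lt (by linarith) hs).smul_const _
  have hunion : Set.Ioc (0:ℝ) s ∪ Set.Ioi s = Set.Ioi 0 := Set.Ioc_union_Ioi_eq_Ioi hs.le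
  have hint : IntegrableOn f (Set.Ioi 0) := by
    rw [← hunion]; exact hint1.union hint2
  refine ⟨hint, ?_⟩
  -- split the integral
  have hsplit : ∫ r in Set.Ioi (0:ℝ), f r
      = (∫ r in Set.Ioc (0:ℝ) s, f r) + ∫ r in Set.Ioi s, f r := by
    rw [← hunion]
    exact setIntegral_union (Set.Ioc_disjoint_Ioi le_rfl) measurableSet_Ioi hint1 hint2
  -- bound on Ioc part
  have hval1 : ∫ r in Set.Ioc (0:ℝ) s, r ^ (-(1/2 + ε)) = s ^ ((1:ℝ)/2 - ε) / (1/2 - ε) := by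
    rw [← intervalIntegral.integral_of_le hs.le,
      integral_rpow (Or.inl (by linarith : (-1:ℝ) < -(1/2 + ε)))]
    have he : -(1/2 + ε) + 1 = (1:ℝ)/2 - ε := by ring
    rw [he, Real.zero_rpow (ne_of_gt hεd), sub_zero]
  have hbound1 : ‖∫ r in Set.Ioc (0:ℝ) s, f r‖ ≤ K1 * (s ^ ((1:ℝ)/2 - ε) / (1/2 - ε)) := by
    calc ‖∫ r in Set.Ioc (0:ℝ) s, f r‖ ≤ ∫ r in Set.Ioc (0:ℝ) s, ‖f r‖ :=
          norm_integral_le_integral_norm _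
      _ ≤ ∫ r in Set.Ioc (0:ℝ) s, K1 * r ^ (-(1/2 + ε)) :=
          setIntegral_mono_on hint1.norm (hg1.const_mul K1) measurableSet_Ioc key
      _ = K1 * ∫ r in Set.Ioc (0:ℝ) s, r ^ (-(1/2 + ε)) := integral_const_mul _ _
      _ = K1 * (s ^ ((1:ℝ)/2 - ε) / (1/2 - ε)) := by rw [hval1]
  -- Ioi s part
  have hval2 : ∫ r in Set.Ioi s, (r : ℝ) ^ (-(H + 1/2))
      = s ^ ((1:ℝ)/2 - H) / (H - 1/2) := by
    rw [integral_Ioi_rpow_of_lt (by linarith) hs]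
    have he : -(H + 1/2) + 1 = (1:ℝ)/2 - H := by ring
    rw [he, div_eq_div_iff (by linarith : (1:ℝ)/2 - H ≠ 0) (ne_of_gt hHd)]
    ring
  have hbound2 : ‖∫ r in Set.Ioi s, f r‖
      ≤ s ^ ((1:ℝ)/2 - H) / (H - 1/2) * (M * ‖Y s - y₀‖) := by
    rw [setIntegral_congr_fun measurableSet_Ioi hfe, integral_smul_const, hval2]
    rw [norm_smul, Real.norm_eq_abs,
      abs_of_nonneg (div_nonneg (Real.rpow_nonneg hs.le _) hHd.le)]
    exact mul_le_mul_of_nonneg_left (hlip _ _)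
      (div_nonneg (Real.rpow_nonneg hs.le _) hHd.le)
  -- combine
  have htot : ‖∫ r in Set.Ioi (0:ℝ), f r‖
      ≤ K1 * (s ^ ((1:ℝ)/2 - ε) / (1/2 - ε))
        + s ^ ((1:ℝ)/2 - H) / (H - 1/2) * (M * ‖Y s - y₀‖) := by
    rw [hsplit]
    exact le_trans (norm_add_le _ _) (add_le_add hbound1 hbound2)
  refine le_trans htot ?_
  have ht1 : (0:ℝ) ≤ s ^ ((1:ℝ)/2 - ε) * Z * (1 + s) ^ (2*ε) := by positivity
  have ht2 : (0:ℝ) ≤ ‖Y s - y₀‖ * s ^ ((1:ℝ)/2 - H) :=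
    mul_nonneg (norm_nonneg _) (Real.rpow_nonneg hs.le _)
  have e1 : K1 * (s ^ ((1:ℝ)/2 - ε) / (1/2 - ε))
      = M / (1/2 - ε) * (s ^ ((1:ℝ)/2 - ε) * Z * (1 + s) ^ (2*ε)) := by
    rw [hK1]; field_simp
  have e2 : s ^ ((1:ℝ)/2 - H) / (H - 1/2) * (M * ‖Y s - y₀‖)
      = M / (H - 1/2) * (‖Y s - y₀‖ * s ^ ((1:ℝ)/2 - H)) := by
    field_simp
  rw [e1, e2]
  have hC1 : (0:ℝ) ≤ M / (1/2 - ε) := div_nonneg hM hεd.le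
  have hC2 : (0:ℝ) ≤ M / (H - 1/2) := div_nonneg hM hHd.le
  nlinarith [mul_nonneg hC1 ht2, mul_nonneg hC2 ht1, ht1, ht2]
end
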